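/- Let V be a finite-dimensional complex inner product space, let Δ > 0, and let W : ℝ → ℝ be an integrable function, odd on ℝ ∖ {0}, such that ∫_ℝ W(t) e^{i t λ} dt = i/λ for every real λ with |λ| ≥ Δ. Let H be a self-adjoint operator on V whose lowest eigenvalue E0 is simple with unit eigenvector ψ0, and whose every other eigenvalue E satisfies E − E0 ≥ Δ. Let A be any operator on V and define S(H, A) = ∫_ℝ W(t) e^{itH} A e^{−itH} dt. Then: (i) for every eigenvector φ of H with eigenvalue E ≠ E0, ⟨φ, S(H, A) ψ0⟩ = (i/(E − E0)) ⟨φ, A ψ0⟩; and (ii) ⟨ψ0, S(H, A) ψ0⟩ = 0. -/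

import Mathlib

open MeasureTheory ComplexConjugate
open scoped ComplexInnerProductSpace

section Aux

variable {V : Type*} [NormedAddCommGroup V] [InnerProductSpace ℂ V] [FiniteDimensional ℂ V]

lemma exp_apply_eigen (c : ℂ) (H : V →L[ℂ] V) (E : ℂ) (φ : V) (h : H φ = E • φ) :
    NormedSpace.exp (c • H) φ = Complex.exp (c * E) • φ := by
  have hpow : ∀ n : ℕ, ((c • H) ^ n) φ = (c * E) ^ n • φ := by
    intro n
    induction n with
    | zero => simp
    | succ n ih =>
        rw [pow_succ, ContinuousLinearMap.mul_apply, ContinuousLinearMap.smul_apply, h,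
          smul_smul, _root_.map_smul, ih, smul_smul, pow_succ]
        ring_nf
  have hsum := NormedSpace.expSeries_summable' (𝕂 := ℂ) (c • H)
  have h1 : NormedSpace.exp (c • H) φ
      = (ContinuousLinearMap.apply ℂ V φ) (∑' n : ℕ, ((n.factorial : ℂ))⁻¹ • (c • H) ^ n) := by
    rw [NormedSpace.exp_eq_tsum ℂ]; rfl
  rw [h1, (ContinuousLinearMap.apply ℂ V φ).map_tsum hsum]
  have h2 : ∀ n : ℕ, (ContinuousLinearMap.apply ℂ V φ) (((n.factorial : ℂ))⁻¹ • (c • H) ^ n)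
      = (((n.factorial : ℂ))⁻¹ • (c * E) ^ n) • φ := by
    intro n
    simp only [ContinuousLinearMap.apply_apply, ContinuousLinearMap.smul_apply, hpow,
      smul_smul, smul_eq_mul]
  rw [tsum_congr h2, (NormedSpace.expSeries_summable' (𝕂 := ℂ) (c * E)).tsum_smul_const]
  congr 1
  rw [Complex.exp_eq_exp_ℂ, NormedSpace.exp_eq_tsum ℂ]

lemma star_exp_smul (c : ℂ) (H : V →L[ℂ] V) (hH : IsSelfAdjoint H) :
    star (NormedSpace.exp (c • H)) = NormedSpace.exp ((starRingEnd ℂ c) • H) := by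
  rw [NormedSpace.star_exp, star_smul, hH.star_eq]
  rfl

lemma norm_exp_I_smul_le (t : ℂ) (ht : (starRingEnd ℂ) t = -t) (H : V →L[ℂ] V)
    (hH : IsSelfAdjoint H) : ‖NormedSpace.exp (t • H)‖ ≤ 1 := by
  have hskew : t • H ∈ skewAdjoint (V →L[ℂ] V) := by
    rw [skewAdjoint.mem_iff, star_smul, hH.star_eq]
    show (starRingEnd ℂ t) • H = -(t • H)
    rw [ht, neg_smul]
  letI : NormedAlgebra ℚ (V →L[ℂ] V) := NormedAlgebra.restrictScalars ℚ ℂ _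
  have hu : NormedSpace.exp (t • H) ∈ unitary (V →L[ℂ] V) :=
    NormedSpace.exp_mem_unitary_of_mem_skewAdjoint hskew
  set u := NormedSpace.exp (t • H)
  have h1 : star u * u = 1 := (Unitary.mem_iff.mp hu).1
  have h2 : ‖star u * u‖ = ‖u‖ * ‖u‖ := CStarRing.norm_star_mul_self
  rw [h1] at h2
  have h3 : ‖(1 : V →L[ℂ] V)‖ ≤ 1 := by
    rw [ContinuousLinearMap.one_def]; exact ContinuousLinearMap.norm_id_le
  nlinarith [norm_nonneg u]

end Aux

section Main

variable {V : Type*} [NormedAddCommGroup V] [InnerProductSpace ℂ V] [FiniteDimensional ℂ V]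

set_option synthInstance.maxHeartbeats 800000 in
lemma matrix_element (W : ℝ → ℝ) (hWint : Integrable W) (H : V →L[ℂ] V) (hH : IsSelfAdjoint H)
    (E0 E : ℝ) (ψ0 φ : V) (heig : H ψ0 = (E0 : ℂ) • ψ0) (heigφ : H φ = (E : ℂ) • φ)
    (A : V →L[ℂ] V) :
    ⟪φ, (∫ t : ℝ, W t • (NormedSpace.exp ((Complex.I * t) • H) * A *
        NormedSpace.exp ((-(Complex.I * t)) • H))) ψ0⟫
      = (∫ t : ℝ, (W t : ℂ) * Complex.exp (Complex.I * t * ((E : ℂ) - (E0 : ℂ))))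
          * ⟪φ, A ψ0⟫ := by
  set G : ℝ → (V →L[ℂ] V) := fun t =>
    NormedSpace.exp ((Complex.I * t) • H) * A * NormedSpace.exp ((-(Complex.I * t)) • H)
    with hG_def
  set F : ℝ → (V →L[ℂ] V) := fun t => W t • G t with hF_def
  have hconj1 : ∀ t : ℝ, (starRingEnd ℂ) (Complex.I * t) = -(Complex.I * t) := by
    intro t; simp [Complex.conj_ofReal]
  have hconj2 : ∀ t : ℝ, (starRingEnd ℂ) (-(Complex.I * t)) = -(-(Complex.I * t)) := by
    intro t; simp [Complex.conj_ofReal]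
  have hGcont : Continuous G := by
    letI : NormedAlgebra ℚ (V →L[ℂ] V) := NormedAlgebra.restrictScalars ℚ ℂ _
    have h1 : Continuous fun t : ℝ => (Complex.I * t) • H :=
      ((continuous_const.mul Complex.continuous_ofReal).smul continuous_const)
    have h2 : Continuous fun t : ℝ => (-(Complex.I * t)) • H :=
      (((continuous_const.mul Complex.continuous_ofReal).neg).smul continuous_const)
    exact ((NormedSpace.exp_continuous.comp h1).mul continuous_const).mul
      (NormedSpace.exp_continuous.comp h2)
  have hbound : ∀ t : ℝ, ‖F t‖ ≤ |W t| * ‖A‖ := by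
    intro t
    have hu1 : ‖NormedSpace.exp ((Complex.I * t) • H)‖ ≤ 1 :=
      norm_exp_I_smul_le _ (hconj1 t) H hH
    have hu2 : ‖NormedSpace.exp ((-(Complex.I * t)) • H)‖ ≤ 1 :=
      norm_exp_I_smul_le _ (hconj2 t) H hH
    have h3 : ‖G t‖ ≤ ‖A‖ := by
      calc ‖G t‖ ≤ ‖NormedSpace.exp ((Complex.I * t) • H) * A‖ *
            ‖NormedSpace.exp ((-(Complex.I * t)) • H)‖ := norm_mul_le _ _
        _ ≤ (‖NormedSpace.exp ((Complex.I * t) • H)‖ * ‖A‖) * 1 := by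
            apply mul_le_mul (norm_mul_le _ _) hu2 (norm_nonneg _)
            positivity
        _ ≤ (1 * ‖A‖) * 1 := by
            apply mul_le_mul_of_nonneg_right _ zero_le_one
            exact mul_le_mul_of_nonneg_right hu1 (norm_nonneg _)
        _ = ‖A‖ := by ring
    have h4 : ‖F t‖ = |W t| * ‖G t‖ := by
      have h5 := norm_smul (W t) (G t)
      rw [Real.norm_eq_abs] at h5
      exact h5
    rw [h4]
    exact mul_le_mul_of_nonneg_left h3 (abs_nonneg _)
  have hFmeas : AEStronglyMeasurable F volume :=
    hWint.aestronglyMeasurable.smul hGcont.aestronglyMeasurable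
  have hFint : Integrable F :=
    Integrable.mono' (hWint.abs.mul_const ‖A‖) hFmeas (Filter.Eventually.of_forall hbound)
  rw [ContinuousLinearMap.integral_apply hFint,
    ← integral_inner (hFint.apply_continuousLinearMap ψ0)]
  have key : ∀ t : ℝ, ⟪φ, F t ψ0⟫
      = (W t : ℂ) * Complex.exp (Complex.I * t * ((E : ℂ) - (E0 : ℂ))) * ⟪φ, A ψ0⟫ := by
    intro t
    have hU' : NormedSpace.exp ((-(Complex.I * t)) • H) ψ0
        = Complex.exp ((-(Complex.I * t)) * E0) • ψ0 := exp_apply_eigen _ H _ ψ0 heig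
    have hadj : ContinuousLinearMap.adjoint (NormedSpace.exp ((Complex.I * t) • H))
        = NormedSpace.exp ((-(Complex.I * t)) • H) := by
      rw [← ContinuousLinearMap.star_eq_adjoint, star_exp_smul _ _ hH, hconj1 t]
    have hUφ : NormedSpace.exp ((-(Complex.I * t)) • H) φ
        = Complex.exp ((-(Complex.I * t)) * E) • φ := exp_apply_eigen _ H _ φ heigφ
    have hsm : F t ψ0 = (W t : ℂ) • (Complex.exp ((-(Complex.I * t)) * E0) •
        (NormedSpace.exp ((Complex.I * t) • H)) (A ψ0)) := by
      rw [hF_def]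
      simp only []
      rw [ContinuousLinearMap.smul_apply]
      rw [RCLike.real_smul_eq_coe_smul (K := ℂ)]
      congr 1
      simp only [hG_def, ContinuousLinearMap.mul_apply, hU', _root_.map_smul]
    have hc : (starRingEnd ℂ) ((-(Complex.I * t)) * E) = Complex.I * t * E := by
      simp [Complex.conj_ofReal]
    rw [hsm, inner_smul_right, inner_smul_right,
      ← ContinuousLinearMap.adjoint_inner_left, hadj, hUφ, inner_smul_left,
      ← Complex.exp_conj, hc]
    have hmul : Complex.exp (Complex.I * t * E) * Complex.exp (-(Complex.I * t) * E0)
        = Complex.exp (Complex.I * t * ((E : ℂ) - (E0 : ℂ))) := by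
      rw [← Complex.exp_add]; ring_nf
    rw [← hmul]; ring
  rw [integral_congr_ae (Filter.Eventually.of_forall key), integral_mul_const]

end Main

lemma integral_odd_eq_zero (W : ℝ → ℝ) (hWint : Integrable W)
    (hWodd : ∀ t : ℝ, t ≠ 0 → W (-t) = -W t) : ∫ t : ℝ, W t = 0 := by
  have h0 : ∀ᵐ t : ℝ, t ≠ 0 := by
    rw [MeasureTheory.ae_iff]
    simp only [ne_eq, not_not]
    exact measure_singleton 0
  have hodd : ∀ᵐ t : ℝ, W (-t) = -W t := h0.mono fun t ht => hWodd t ht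
  have h1 : (∫ t : ℝ, W (-t)) = ∫ t : ℝ, W t := integral_neg_eq_self W volume
  have h2 : (∫ t : ℝ, W (-t)) = ∫ t : ℝ, -W t := integral_congr_ae hodd
  rw [integral_neg] at h2
  linarith

/-- Matrix elements of the quasi-adiabatic generator
`S(H, A) = ∫ W(t) e^{itH} A e^{-itH} dt`: for an eigenvector `φ` with eigenvalue
`E ≠ E0` one has `⟪φ, S ψ0⟫ = (i/(E - E0)) ⟪φ, A ψ0⟫`, and `⟪ψ0, S ψ0⟫ = 0`. -/
theorem quasi_adiabatic_generator_matrix_elements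
    {V : Type*} [NormedAddCommGroup V] [InnerProductSpace ℂ V] [FiniteDimensional ℂ V]
    (Δ : ℝ) (hΔ : 0 < Δ) (W : ℝ → ℝ)
    (hWint : MeasureTheory.Integrable W)
    (hWodd : ∀ t : ℝ, t ≠ 0 → W (-t) = -W t)
    (hWfourier : ∀ l : ℝ, Δ ≤ |l| →
      ∫ t : ℝ, (W t : ℂ) * Complex.exp (Complex.I * t * l) = Complex.I / l)
    (H : V →L[ℂ] V) (hH : IsSelfAdjoint H)
    (E0 : ℝ) (ψ0 : V) (hψ0 : ‖ψ0‖ = 1) (heig : H ψ0 = (E0 : ℂ) • ψ0)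
    (hsimple : ∀ v : V, H v = (E0 : ℂ) • v → ∃ c : ℂ, v = c • ψ0)
    (hgap : ∀ μ : ℝ, (∃ v : V, v ≠ 0 ∧ H v = (μ : ℂ) • v) → μ = E0 ∨ Δ ≤ μ - E0)
    (A : V →L[ℂ] V) (S : V →L[ℂ] V)
    (hS : S = ∫ t : ℝ, W t • (NormedSpace.exp ((Complex.I * t) • H) * A *
      NormedSpace.exp ((-(Complex.I * t)) • H))) :
    (∀ (φ : V) (E : ℝ), φ ≠ 0 → E ≠ E0 → H φ = (E : ℂ) • φ →
      ⟪φ, S ψ0⟫ = (Complex.I / ((E : ℂ) - (E0 : ℂ))) * ⟪φ, A ψ0⟫) ∧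
    ⟪ψ0, S ψ0⟫ = 0 := by
  constructor
  · intro φ E hφne hEne heigφ
    have hgapE : Δ ≤ E - E0 := by
      rcases hgap E ⟨φ, hφne, heigφ⟩ with h | h
      · exact absurd h hEne
      · exact h
    have habs : Δ ≤ |E - E0| := le_trans hgapE (le_abs_self _)
    have hfour := hWfourier (E - E0) habs
    rw [hS, matrix_element W hWint H hH E0 E ψ0 φ heig heigφ A]
    have hcast : ((E - E0 : ℝ) : ℂ) = (E : ℂ) - (E0 : ℂ) := by push_cast; ring
    rw [← hcast, hfour]
  · rw [hS, matrix_element W hWint H hH E0 E0 ψ0 ψ0 heig heig A]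
    have hz : ∀ t : ℝ, (W t : ℂ) * Complex.exp (Complex.I * t * ((E0 : ℂ) - (E0 : ℂ)))
        = ((W t : ℝ) : ℂ) := by intro t; simp
    rw [integral_congr_ae (Filter.Eventually.of_forall hz)]
    have hcoe : (∫ t : ℝ, ((W t : ℝ) : ℂ)) = ((∫ t : ℝ, W t : ℝ) : ℂ) :=
      integral_ofReal (𝕜 := ℂ)
    rw [hcoe, integral_odd_eq_zero W hWint hWodd]
    simp
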